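/- arXiv:1102.3441 — 3 statements merged into one kernel-verified Lean document; each statement's English description precedes it below -/
import Mathlib

section
/- Let a, ξ ∈ [0,1]. Then 1 + (2a - 1)*ξ + 2*sqrt(a*(1-a)*ξ*(1-ξ)) ≤ 1 + sqrt(ξ). -/
theorem stmt_1 (a ξ : ℝ) (ha0 : 0 ≤ a) (ha1 : a ≤ 1) (hξ0 : 0 ≤ ξ) (hξ1 : ξ ≤ 1) :
    1 + (2 * a - 1) * ξ + 2 * Real.sqrt (a * (1 - a) * ξ * (1 - ξ)) ≤ 1 + Real.sqrt ξ := by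
  set s := Real.sqrt ξ with hs
  set t := Real.sqrt (a * (1 - a) * ξ * (1 - ξ)) with ht
  have hs0 : 0 ≤ s := Real.sqrt_nonneg _
  have hs1 : s ≤ 1 := by
    rw [hs]; simpa using Real.sqrt_le_sqrt hξ1
  have hssq : s ^ 2 = ξ := by rw [hs, sq, Real.mul_self_sqrt hξ0]
  have ht0 : 0 ≤ t := Real.sqrt_nonneg _
  have htsq : t ^ 2 = a * (1 - a) * ξ * (1 - ξ) := by
    rw [ht, sq, Real.mul_self_sqrt
      (mul_nonneg (mul_nonneg (mul_nonneg ha0 (by linarith)) hξ0) (by linarith))]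
  have hu : 0 ≤ s - (2 * a - 1) * s ^ 2 := by nlinarith
  have hkey : (s - (2 * a - 1) * s ^ 2) ^ 2 - 4 * t ^ 2 = s ^ 2 * (2 * a - 1 - s) ^ 2 := by
    rw [htsq, ← hssq]; ring
  have h2t : 2 * t ≤ s - (2 * a - 1) * s ^ 2 := by
    nlinarith [sq_nonneg (s * (2 * a - 1 - s)), sq_nonneg (s - (2 * a - 1) * s ^ 2 - 2 * t),
      sq_nonneg (s - (2 * a - 1) * s ^ 2 + 2 * t)]
  nlinarith [hssq]
end

section
/- Leftover Hash Lemma: Let V be a random variable over {0,1}^ℓ with min-entropy at least λ, and let H be a pairwise independent family of hash functions from {0,1}^ℓ to {0,1}^v with v = λ − 2·log(1/ε). Then the statistical distance between (H, H(V)) and (H, U_v) is at most ε, where H is uniform over the family independent of V, and U_v is uniform over {0,1}^v. -/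
private lemma fiber_sq {α β : Type*} [Fintype α] [Fintype β] [DecidableEq β]
    (g : α → β) (p : α → ℝ) :
    ∑ y : β, (∑ x ∈ Finset.univ.filter (fun x => g x = y), p x) ^ 2
      = ∑ x : α, p x * ∑ x' ∈ Finset.univ.filter (fun x' => g x' = g x), p x' := by
  have h1 : ∀ y : β, (∑ x ∈ Finset.univ.filter (fun x => g x = y), p x) ^ 2
      = ∑ x ∈ Finset.univ.filter (fun x => g x = y),
          p x * ∑ x' ∈ Finset.univ.filter (fun x' => g x' = g x), p x' := by
    intro y
    rw [sq, Finset.sum_mul]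
    refine Finset.sum_congr rfl fun x hx => ?_
    have hy : g x = y := (Finset.mem_filter.mp hx).2
    rw [hy]
  rw [Finset.sum_congr rfl fun y _ => h1 y]
  exact Finset.sum_fiberwise_of_maps_to (fun x _ => Finset.mem_univ _) _

theorem stmt_11 (ℓ v : ℕ) {H : Type*} [Fintype H] [Nonempty H]
    (eval : H → (Fin ℓ → ZMod 2) → (Fin v → ZMod 2))
    -- `H` (with uniform distribution) is a pairwise independent hash family
    (hpair : ∀ x x' : Fin ℓ → ZMod 2, x ≠ x' → ∀ y y' : Fin v → ZMod 2,
      ((Finset.univ.filter (fun h : H => eval h x = y ∧ eval h x' = y')).card : ℝ)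
        / Fintype.card H = ((2 : ℝ) ^ (2 * v))⁻¹)
    -- `pV` is a distribution on `{0,1}^ℓ` with min-entropy at least `λ`
    (pV : (Fin ℓ → ZMod 2) → ℝ) (hpV0 : ∀ x, 0 ≤ pV x) (hpV1 : ∑ x, pV x = 1)
    (lam : ℝ) (hmin : ∀ x, pV x ≤ (2 : ℝ) ^ (-lam))
    (ε : ℝ) (hε : 0 < ε)
    -- the output length is `λ - 2 log(1/ε)`
    (hv : (v : ℝ) = lam - 2 * Real.logb 2 (1 / ε)) :
    (1 / 2) * ∑ h : H, ∑ y : Fin v → ZMod 2,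
        |(Fintype.card H : ℝ)⁻¹ * (∑ x ∈ Finset.univ.filter (fun x => eval h x = y), pV x)
          - (Fintype.card H : ℝ)⁻¹ * ((2 : ℝ) ^ v)⁻¹| ≤ ε := by
  classical
  have hc : (0:ℝ) < (Fintype.card H : ℝ) := by exact_mod_cast Fintype.card_pos
  set c : ℝ := (Fintype.card H : ℝ) with hc_def
  have hc' : c ≠ 0 := hc.ne'
  have h2v : ((2:ℝ) ^ v) ≠ 0 := by positivity
  have hcard : ((Finset.univ : Finset (Fin v → ZMod 2)).card : ℝ) = 2 ^ v := by
    simp [Finset.card_univ]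
  -- abbreviation
  set S : H → (Fin v → ZMod 2) → ℝ :=
    fun h y => ∑ x ∈ Finset.univ.filter (fun x => eval h x = y), pV x with hS_def
  set q : ℝ := c⁻¹ * ((2:ℝ) ^ v)⁻¹ with hq_def
  show (1 / 2) * ∑ h : H, ∑ y : Fin v → ZMod 2, |c⁻¹ * S h y - q| ≤ ε
  -- Step A: counting collisions of a pairwise independent family
  have hA : ∀ x x' : Fin ℓ → ZMod 2, x ≠ x' →
      ((Finset.univ.filter (fun h : H => eval h x' = eval h x)).card : ℝ) = c / 2 ^ v := by
    intro x x' hne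
    have hcount : ∀ y : Fin v → ZMod 2,
        ((Finset.univ.filter (fun h : H => eval h x' = y ∧ eval h x = y)).card : ℝ)
          = c * ((2:ℝ) ^ (2 * v))⁻¹ := by
      intro y
      have h := hpair x' x (fun e => hne e.symm) y y
      rw [div_eq_iff hc'] at h
      rw [h]; ring
    have hsplit : (Finset.univ.filter (fun h : H => eval h x' = eval h x)).card
        = ∑ y : Fin v → ZMod 2,
            (Finset.univ.filter (fun h : H => eval h x' = y ∧ eval h x = y)).card := by
      rw [Finset.card_eq_sum_card_fiberwise
        (f := fun h => eval h x') (t := Finset.univ) (fun h _ => Finset.mem_univ _)]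
      refine Finset.sum_congr rfl fun y _ => ?_
      congr 1
      rw [Finset.filter_filter]
      refine Finset.filter_congr fun h _ => ?_
      constructor
      · rintro ⟨h1, h2⟩
        exact ⟨h2, h1.symm.trans h2⟩
      · rintro ⟨h1, h2⟩
        exact ⟨h1.trans h2.symm, h1⟩
    calc ((Finset.univ.filter (fun h : H => eval h x' = eval h x)).card : ℝ)
        = ∑ y : Fin v → ZMod 2,
            ((Finset.univ.filter (fun h : H => eval h x' = y ∧ eval h x = y)).card : ℝ) := by
          rw [hsplit]; push_cast; ring
      _ = ∑ _y : Fin v → ZMod 2, c * ((2:ℝ) ^ (2 * v))⁻¹ :=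
          Finset.sum_congr rfl fun y _ => hcount y
      _ = ((2:ℝ) ^ v) * (c * ((2:ℝ) ^ (2 * v))⁻¹) := by
          rw [Finset.sum_const, nsmul_eq_mul, hcard]
      _ = c / 2 ^ v := by
          rw [two_mul, pow_add]
          field_simp
  -- per-hash total mass is 1
  have hs1 : ∀ h : H, ∑ y : Fin v → ZMod 2, S h y = 1 := fun h =>
    (Finset.sum_fiberwise_of_maps_to (fun x _ => Finset.mem_univ _) pV).trans hpV1
  -- Step B+C: collision bound
  have hT : ∑ h : H, ∑ y : Fin v → ZMod 2, (S h y) ^ 2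
      ≤ c * ((2:ℝ) ^ (-lam) + ((2:ℝ) ^ v)⁻¹) := by
    have h2 : ∀ x : Fin ℓ → ZMod 2,
        ∑ h : H, ∑ x' ∈ Finset.univ.filter (fun x' => eval h x' = eval h x), pV x'
        = ∑ x' : Fin ℓ → ZMod 2,
            pV x' * ((Finset.univ.filter (fun h : H => eval h x' = eval h x)).card : ℝ) := by
      intro x
      simp_rw [Finset.sum_filter]
      rw [Finset.sum_comm]
      refine Finset.sum_congr rfl fun x' _ => ?_
      rw [← Finset.sum_filter, Finset.sum_const, nsmul_eq_mul, mul_comm]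
    have key : ∀ x : Fin ℓ → ZMod 2,
        ∑ x' : Fin ℓ → ZMod 2,
            pV x' * ((Finset.univ.filter (fun h : H => eval h x' = eval h x)).card : ℝ)
          ≤ (2:ℝ) ^ (-lam) * c + c / 2 ^ v := by
      intro x
      rw [← Finset.add_sum_erase _ _ (Finset.mem_univ x)]
      have e1 : ((Finset.univ.filter (fun h : H => eval h x = eval h x)).card : ℝ) = c := by
        simp [hc_def]
      have t1 : pV x * ((Finset.univ.filter (fun h : H => eval h x = eval h x)).card : ℝ)
          ≤ (2:ℝ) ^ (-lam) * c := by
        rw [e1]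
        exact mul_le_mul_of_nonneg_right (hmin x) hc.le
      have t2 : ∑ x' ∈ Finset.univ.erase x,
            pV x' * ((Finset.univ.filter (fun h : H => eval h x' = eval h x)).card : ℝ)
          ≤ c / 2 ^ v := by
        have e2 : ∀ x' ∈ Finset.univ.erase x,
            pV x' * ((Finset.univ.filter (fun h : H => eval h x' = eval h x)).card : ℝ)
              = pV x' * (c / 2 ^ v) := by
          intro x' hx'
          rw [hA x x' (fun e => (Finset.mem_erase.mp hx').1 e.symm)]
        rw [Finset.sum_congr rfl e2, ← Finset.sum_mul]
        have hle1 : ∑ x' ∈ Finset.univ.erase x, pV x' ≤ 1 := by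
          rw [← hpV1]
          exact Finset.sum_le_sum_of_subset_of_nonneg (Finset.erase_subset _ _)
            (fun i _ _ => hpV0 i)
        have hcv : (0:ℝ) ≤ c / 2 ^ v := by positivity
        calc (∑ x' ∈ Finset.univ.erase x, pV x') * (c / 2 ^ v)
            ≤ 1 * (c / 2 ^ v) := mul_le_mul_of_nonneg_right hle1 hcv
          _ = c / 2 ^ v := one_mul _
      exact add_le_add t1 t2
    calc ∑ h : H, ∑ y : Fin v → ZMod 2, (S h y) ^ 2
        = ∑ h : H, ∑ x : Fin ℓ → ZMod 2,
            pV x * ∑ x' ∈ Finset.univ.filter (fun x' => eval h x' = eval h x), pV x' :=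
          Finset.sum_congr rfl fun h _ => fiber_sq (eval h) pV
      _ = ∑ x : Fin ℓ → ZMod 2, pV x *
            ∑ h : H, ∑ x' ∈ Finset.univ.filter (fun x' => eval h x' = eval h x), pV x' := by
          rw [Finset.sum_comm]
          exact Finset.sum_congr rfl fun x _ => (Finset.mul_sum _ _ _).symm
      _ = ∑ x : Fin ℓ → ZMod 2, pV x *
            ∑ x' : Fin ℓ → ZMod 2,
              pV x' * ((Finset.univ.filter (fun h : H => eval h x' = eval h x)).card : ℝ) :=
          Finset.sum_congr rfl fun x _ => by rw [h2 x]
      _ ≤ ∑ x : Fin ℓ → ZMod 2, pV x * ((2:ℝ) ^ (-lam) * c + c / 2 ^ v) :=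
          Finset.sum_le_sum fun x _ => mul_le_mul_of_nonneg_left (key x) (hpV0 x)
      _ = (2:ℝ) ^ (-lam) * c + c / 2 ^ v := by rw [← Finset.sum_mul, hpV1, one_mul]
      _ = c * ((2:ℝ) ^ (-lam) + ((2:ℝ) ^ v)⁻¹) := by field_simp
  -- sum of squared differences
  have hD : ∑ h : H, ∑ y : Fin v → ZMod 2, (c⁻¹ * S h y - q) ^ 2 ≤ (2:ℝ) ^ (-lam) / c := by
    have e1 : ∀ h : H, ∑ y : Fin v → ZMod 2, (c⁻¹ * S h y - q) ^ 2
        = c⁻¹ * c⁻¹ * (∑ y : Fin v → ZMod 2, (S h y) ^ 2)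
            - 2 * c⁻¹ * q + (2:ℝ) ^ v * q ^ 2 := by
      intro h
      have expand : ∀ y : Fin v → ZMod 2, (c⁻¹ * S h y - q) ^ 2
          = c⁻¹ * c⁻¹ * ((S h y) ^ 2) - (2 * c⁻¹ * q) * (S h y) + q ^ 2 := fun y => by ring
      rw [Finset.sum_congr rfl fun y _ => expand y, Finset.sum_add_distrib,
        Finset.sum_sub_distrib, ← Finset.mul_sum, ← Finset.mul_sum, hs1 h,
        Finset.sum_const, nsmul_eq_mul, hcard, mul_one]
    rw [Finset.sum_congr rfl fun h _ => e1 h, Finset.sum_add_distrib, Finset.sum_sub_distrib,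
      ← Finset.mul_sum, Finset.sum_const, Finset.sum_const, Finset.card_univ,
      nsmul_eq_mul, nsmul_eq_mul]
    have hb : c⁻¹ * c⁻¹ * (∑ h : H, ∑ y : Fin v → ZMod 2, (S h y) ^ 2)
        ≤ c⁻¹ * c⁻¹ * (c * ((2:ℝ) ^ (-lam) + ((2:ℝ) ^ v)⁻¹)) := by
      refine mul_le_mul_of_nonneg_left hT ?_
      positivity
    have e2 : c⁻¹ * c⁻¹ * (c * ((2:ℝ) ^ (-lam) + ((2:ℝ) ^ v)⁻¹))
        - c * (2 * c⁻¹ * q) + c * ((2:ℝ) ^ v * q ^ 2) = (2:ℝ) ^ (-lam) / c := by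
      rw [hq_def]; field_simp; ring
    linarith
  -- Cauchy–Schwarz
  set A : ℝ := ∑ h : H, ∑ y : Fin v → ZMod 2, |c⁻¹ * S h y - q| with hA_def
  have hA0 : 0 ≤ A := by
    rw [hA_def]
    exact Finset.sum_nonneg fun h _ => Finset.sum_nonneg fun y _ => abs_nonneg _
  have hCS : A ^ 2 ≤ (c * 2 ^ v) * ((2:ℝ) ^ (-lam) / c) := by
    have h2 := Finset.sum_mul_sq_le_sq_mul_sq Finset.univ (fun _ => (1:ℝ))
      (fun p : H × (Fin v → ZMod 2) => |c⁻¹ * S p.1 p.2 - q|)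
    simp only [one_mul, one_pow, sq_abs, Fintype.sum_prod_type, Finset.sum_const,
      Finset.card_univ, nsmul_eq_mul, mul_one, Fintype.card_prod] at h2
    have hcf : ((Fintype.card (Fin v → ZMod 2) : ℕ) : ℝ) = 2 ^ v := by
      simp [Finset.card_univ]
    have h3 : ((Fintype.card H * Fintype.card (Fin v → ZMod 2) : ℕ) : ℝ) = c * 2 ^ v := by
      rw [Nat.cast_mul, hcf]
    rw [h3] at h2
    calc A ^ 2 ≤ (c * 2 ^ v) * (∑ h : H, ∑ y : Fin v → ZMod 2, (c⁻¹ * S h y - q) ^ 2) := h2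
      _ ≤ (c * 2 ^ v) * ((2:ℝ) ^ (-lam) / c) := by
          refine mul_le_mul_of_nonneg_left hD ?_
          positivity
  have hrpow : (c * 2 ^ v) * ((2:ℝ) ^ (-lam) / c) = (2:ℝ) ^ ((v:ℝ) - lam) := by
    rw [Real.rpow_sub (by norm_num : (0:ℝ) < 2), Real.rpow_natCast,
      Real.rpow_neg (by norm_num : (0:ℝ) ≤ 2)]
    field_simp
  have hepsq : (2:ℝ) ^ ((v:ℝ) - lam) = ε ^ 2 := by
    have hvl : (v:ℝ) - lam = Real.logb 2 ε * 2 := by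
      rw [hv, one_div, Real.logb_inv]; ring
    rw [hvl, Real.rpow_mul (by norm_num : (0:ℝ) ≤ 2), Real.rpow_logb
      (by norm_num : (0:ℝ) < 2) (by norm_num) hε, Real.rpow_two]
  have hAε : A ≤ ε := by
    have h5 : A ^ 2 ≤ ε ^ 2 := by
      rw [← hepsq, ← hrpow]; exact hCS
    nlinarith
  linarith
end

section
/- Let A : {0,1}^k → {0,1}^n be a (randomized) function, H a pairwise independent hash family from {0,1}^n to {0,1}^{k} (so outputs of f are hashed to length t−Δ₁ = k), f : {0,1}^n → {0,1}^n, and W_{h,η} ⊆ {0,1}^n for each (h, η). Suppose (1) Pr[A(H, U_k) ∈ W_{H, U_k}] ≥ δ where H is uniform over the family and U_k uniform over {0,1}^k, (2) every x ∈ W_{h,η} with η = h(f(x)) satisfies Pr[f(U_n) = f(x)] ≥ 2^{-t-Δ₃}, and (3) x ∈ W_{h,η} implies h(f(x)) = η. Then the algorithm B that on input y = f(x) picks h uniformly and outputs A(h, h(y)) satisfies Pr[f(B(f(U_n))) = f(U_n)] ≥ 2^{-(Δ₁+Δ₃)} · δ, where 2^{-Δ₁} accounts for k = t − Δ₁. 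-/
theorem stmt_16 (n : ℕ) (t Δ₁ Δ₃ δ : ℝ)
    {H K R : Type*} [Fintype H] [Nonempty H] [Fintype K] [Nonempty K]
    [Fintype R] [Nonempty R] [DecidableEq K]
    (eval : H → (Fin n → ZMod 2) → K)
    (f : (Fin n → ZMod 2) → (Fin n → ZMod 2))
    (A : H → K → R → (Fin n → ZMod 2))
    (W : H → K → Finset (Fin n → ZMod 2))
    -- the hash outputs have length k = t - Δ₁
    (hK : (Fintype.card K : ℝ) = (2 : ℝ) ^ (t - Δ₁))
    -- (1) A lands in W with probability at least δ on a uniform hash target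
    (h1 : (∑ h : H, ∑ η : K, ∑ r : R, if A h η r ∈ W h η then (1 : ℝ) else 0)
        / ((Fintype.card H : ℝ) * (Fintype.card K : ℝ) * (Fintype.card R : ℝ)) ≥ δ)
    -- (2) every x ∈ W_{h,η} with η = h(f(x)) is heavy: Pr[f(U_n) = f(x)] ≥ 2^{-t-Δ₃}
    (h2 : ∀ h η x, x ∈ W h η → eval h (f x) = η →
      ((Finset.univ.filter (fun x' => f x' = f x)).card : ℝ) / 2 ^ n
        ≥ (2 : ℝ) ^ (-t - Δ₃))
    -- (3) membership in W_{h,η} forces the hash of f(x) to equal η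
    (h3 : ∀ h η x, x ∈ W h η → eval h (f x) = η) :
    -- B(y) = A(h, h(y), r) for uniform h, r inverts f with probability ≥ 2^{-(Δ₁+Δ₃)}·δ
    (∑ x : Fin n → ZMod 2, ∑ h : H, ∑ r : R,
        if f (A h (eval h (f x)) r) = f x then (1 : ℝ) else 0)
      / ((2 : ℝ) ^ n * (Fintype.card H : ℝ) * (Fintype.card R : ℝ))
      ≥ (2 : ℝ) ^ (-(Δ₁ + Δ₃)) * δ := by
  classical
  set c : ℝ := (2:ℝ)^n * (2:ℝ)^(-t-Δ₃) with hc
  have hcpos : 0 < c := by positivity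
  have hHpos : (0:ℝ) < Fintype.card H := Nat.cast_pos.mpr Fintype.card_pos
  have hKpos : (0:ℝ) < Fintype.card K := Nat.cast_pos.mpr Fintype.card_pos
  have hRpos : (0:ℝ) < Fintype.card R := Nat.cast_pos.mpr Fintype.card_pos
  have h2npos : (0:ℝ) < (2:ℝ)^n := by positivity
  -- key pointwise bound for each h, r
  have key : ∀ h r, (∑ η : K, if A h η r ∈ W h η then (1:ℝ) else 0) * c
      ≤ ∑ x : Fin n → ZMod 2, (if f (A h (eval h (f x)) r) = f x then (1:ℝ) else 0) := by
    intro h r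
    set T : K → Finset (Fin n → ZMod 2) := fun η =>
      if A h η r ∈ W h η then Finset.univ.filter (fun x => f x = f (A h η r)) else ∅ with hT
    have hmem : ∀ η x, x ∈ T η → A h η r ∈ W h η ∧ f x = f (A h η r) := by
      intro η x hx
      by_cases hw : A h η r ∈ W h η
      · simp only [hT, hw, if_true, Finset.mem_filter, Finset.mem_univ, true_and] at hx
        exact ⟨hw, hx⟩
      · simp [hT, hw] at hx
    have heval : ∀ η x, x ∈ T η → eval h (f x) = η := by
      intro η x hx
      obtain ⟨hw, hfx⟩ := hmem η x hx
      rw [hfx]; exact h3 h η _ hw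
    have step1 : ∀ η : K, (if A h η r ∈ W h η then (1:ℝ) else 0) * c ≤ ((T η).card : ℝ) := by
      intro η
      by_cases hw : A h η r ∈ W h η
      · simp only [hw, if_true, one_mul, hT]
        have hh := h2 h η (A h η r) hw (h3 h η _ hw)
        rw [ge_iff_le, le_div_iff₀ h2npos] at hh
        calc c = (2:ℝ)^(-t-Δ₃) * (2:ℝ)^n := by rw [hc]; ring
          _ ≤ _ := hh
      · simp [hw]
    have hdisjoint : ∀ η ∈ (Finset.univ : Finset K), ∀ η' ∈ (Finset.univ : Finset K),
        η ≠ η' → Disjoint (T η) (T η') := by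
      intro η _ η' _ hne
      rw [Finset.disjoint_left]
      intro x hx hx'
      exact hne ((heval η x hx).symm.trans (heval η' x hx'))
    have indeq : ∀ x ∈ Finset.univ.biUnion T,
        (if f (A h (eval h (f x)) r) = f x then (1:ℝ) else 0) = 1 := by
      intro x hx
      obtain ⟨η, _, hxT⟩ := Finset.mem_biUnion.mp hx
      obtain ⟨hw, hfx⟩ := hmem η x hxT
      rw [heval η x hxT, if_pos hfx.symm]
    calc (∑ η : K, if A h η r ∈ W h η then (1:ℝ) else 0) * c
        = ∑ η : K, (if A h η r ∈ W h η then (1:ℝ) else 0) * c := by rw [Finset.sum_mul]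
      _ ≤ ∑ η : K, ((T η).card : ℝ) := Finset.sum_le_sum (fun η _ => step1 η)
      _ = ((Finset.univ.biUnion T).card : ℝ) := by
          rw [Finset.card_biUnion hdisjoint]; push_cast; rfl
      _ = ∑ x ∈ Finset.univ.biUnion T,
            (if f (A h (eval h (f x)) r) = f x then (1:ℝ) else 0) := by
          rw [Finset.card_eq_sum_ones]
          push_cast
          exact Finset.sum_congr rfl (fun x hx => (indeq x hx).symm)
      _ ≤ _ := Finset.sum_le_sum_of_subset_of_nonneg (Finset.subset_univ _)
          (fun x _ _ => by split <;> norm_num)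
  -- sum it up
  set S : ℝ := ∑ h : H, ∑ η : K, ∑ r : R, if A h η r ∈ W h η then (1:ℝ) else 0 with hS
  have hS1 : δ * ((Fintype.card H : ℝ) * (Fintype.card K : ℝ) * (Fintype.card R : ℝ)) ≤ S := by
    rw [ge_iff_le, le_div_iff₀ (by positivity)] at h1
    exact h1
  have hNum : S * c ≤ ∑ x : Fin n → ZMod 2, ∑ h : H, ∑ r : R,
      if f (A h (eval h (f x)) r) = f x then (1:ℝ) else 0 := by
    have hre : (∑ x : Fin n → ZMod 2, ∑ h : H, ∑ r : R,
        if f (A h (eval h (f x)) r) = f x then (1:ℝ) else 0)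
        = ∑ h : H, ∑ r : R, ∑ x : Fin n → ZMod 2,
        if f (A h (eval h (f x)) r) = f x then (1:ℝ) else 0 := by
      rw [Finset.sum_comm]
      exact Finset.sum_congr rfl (fun h _ => Finset.sum_comm)
    rw [hre, hS]
    calc (∑ h : H, ∑ η : K, ∑ r : R, if A h η r ∈ W h η then (1:ℝ) else 0) * c
        = ∑ h : H, ∑ r : R, (∑ η : K, if A h η r ∈ W h η then (1:ℝ) else 0) * c := by
          rw [Finset.sum_mul]
          refine Finset.sum_congr rfl (fun h _ => ?_)
          rw [Finset.sum_comm, Finset.sum_mul]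
      _ ≤ _ := Finset.sum_le_sum (fun h _ => Finset.sum_le_sum (fun r _ => key h r))
  have hpow : (2:ℝ)^(t-Δ₁) * (2:ℝ)^(-t-Δ₃) = (2:ℝ)^(-(Δ₁+Δ₃)) := by
    rw [← Real.rpow_add (by norm_num : (0:ℝ) < 2)]
    congr 1; ring
  rw [ge_iff_le, le_div_iff₀ (by positivity)]
  calc (2:ℝ)^(-(Δ₁+Δ₃)) * δ * ((2:ℝ)^n * (Fintype.card H : ℝ) * (Fintype.card R : ℝ))
      = δ * ((Fintype.card H : ℝ) * (Fintype.card K : ℝ) * (Fintype.card R : ℝ)) * c := by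
        rw [hK, hc, ← hpow]; ring
    _ ≤ S * c := mul_le_mul_of_nonneg_right hS1 hcpos.le
    _ ≤ _ := hNum
end
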